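/- The sequence B_k (with B_0 = 0, B_1 = 1, B_k = -4*B_{k-1} - 8*B_{k-2} + (8^k-1)/7) satisfies B_{4m+7} + 64*B_{4m+3} = 5*(8^{4m+6} - 1)/7 for all integers m ≥ 0. -/
import Mathlib


/-- The integer sequence `B` with `B 0 = 0`, `B 1 = 1`, and
`B k = -4 * B (k-1) - 8 * B (k-2) + (8^k - 1)/7` for `k ≥ 2`. -/
def B : ℕ → ℤ
  | 0 => 0
  | 1 => 1
  | (k+2) => -4 * B (k+1) - 8 * B k + ((8:ℤ)^(k+2) - 1)/7

lemma dvd7 (n : ℕ) : (7:ℤ) ∣ 8^n - 1 := by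
  have h : ((8:ℤ) - 1) ∣ 8^n - 1^n := sub_dvd_pow_sub_pow 8 1 n
  simpa using h

lemma key (k : ℕ) : B (k+4) + 64 * B k = 5 * (((8:ℤ)^(k+3) - 1)/7) := by
  have h2 : B (k+2) = -4 * B (k+1) - 8 * B k + ((8:ℤ)^(k+2) - 1)/7 := rfl
  have h3 : B (k+3) = -4 * B (k+2) - 8 * B (k+1) + ((8:ℤ)^(k+3) - 1)/7 := rfl
  have h4 : B (k+4) = -4 * B (k+3) - 8 * B (k+2) + ((8:ℤ)^(k+4) - 1)/7 := rfl
  obtain ⟨c2, hc2⟩ := dvd7 (k+2)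
  obtain ⟨c3, hc3⟩ := dvd7 (k+3)
  obtain ⟨c4, hc4⟩ := dvd7 (k+4)
  rw [h4, h3, h2, hc2, hc3, hc4,
    Int.mul_ediv_cancel_left _ (by norm_num : (7:ℤ) ≠ 0),
    Int.mul_ediv_cancel_left _ (by norm_num : (7:ℤ) ≠ 0),
    Int.mul_ediv_cancel_left _ (by norm_num : (7:ℤ) ≠ 0)]
  have e3 : (8:ℤ)^(k+3) = 8 * 8^(k+2) := by ring
  have e4 : (8:ℤ)^(k+4) = 64 * 8^(k+2) := by ring
  rw [e3] at hc3
  rw [e4] at hc4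
  linarith

theorem stmt_1 (m : ℕ) :
    B (4*m+7) + 64 * B (4*m+3) = 5 * (((8:ℤ)^(4*m+6) - 1)/7) := by
  have := key (4*m+3)
  have h1 : 4*m+3+4 = 4*m+7 := by ring
  have h2 : 4*m+3+3 = 4*m+6 := by ring
  rw [h1, h2] at this
  exact this
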